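/- Let n be a positive integer, C an additive category, and E : C^op × C → Ab a biadditive functor. Let ⟨X•,δ⟩ (with ends A = X^0, C = X^{n+1}) and ⟨Y•,ρ⟩ (with ends B = Y^0, D = Y^{n+1}) be E-attached complexes. Then the E-attached complex ⟨X•⊕Y•, δ⊕ρ⟩ is an n-exangle if and only if both ⟨X•,δ⟩ and ⟨Y•,ρ⟩ are n-exangles. -/

import Mathlib

/-!
Basic definitions for the theory of `n`-exangulated categories
(Herschend–Liu–Nakaoka): `(n+2)`-term complexes in an additive category,
morphisms of such complexes, homotopies, and homotopy equivalences.

A complex is recorded as a function `obj : ℕ → C` together with differentials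
`d i : obj i ⟶ obj (i+1)`; only the components in degrees `0, …, n+1`
(and the differentials `d 0, …, d n`) are relevant, which is why all
conditions are imposed only in that range.
-/

open CategoryTheory CategoryTheory.Limits Opposite

universe w v u

namespace NExangulated

variable (C : Type u) [Category.{v} C] [Preadditive C]

/-- An `(n+2)`-term complex `X^0 → X^1 → ⋯ → X^{n+1}` in `C`. -/
structure NComplex (n : ℕ) where
  /-- the objects; only `obj 0, …, obj (n+1)` are relevant -/
  obj : ℕ → C
  /-- the differentials -/
  d : ∀ i : ℕ, obj i ⟶ obj (i + 1)
  /-- `d^{i+1} ∘ d^i = 0` for `0 ≤ i ≤ n-1` -/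
  d_comp_d : ∀ i : ℕ, i + 1 ≤ n → d i ≫ d (i + 1) = 0

variable {C}
variable {n : ℕ}

/-- A morphism of `(n+2)`-term complexes. -/
structure NComplexHom (X Y : NComplex C n) where
  /-- the components; only `f 0, …, f (n+1)` are relevant -/
  f : ∀ i : ℕ, X.obj i ⟶ Y.obj i
  /-- compatibility with the differentials, for `0 ≤ i ≤ n` -/
  comm : ∀ i : ℕ, i ≤ n → f i ≫ Y.d i = X.d i ≫ f (i + 1)

/-- The identity morphism of complexes. -/
def NComplexHom.id (X : NComplex C n) : NComplexHom X X where
  f _ := 𝟙 _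
  comm _ _ := by simp

/-- Composition of morphisms of complexes (in diagrammatic order:
`f.comp g` is `g• ∘ f•`). -/
def NComplexHom.comp {X Y Z : NComplex C n} (f : NComplexHom X Y) (g : NComplexHom Y Z) :
    NComplexHom X Z where
  f i := f.f i ≫ g.f i
  comm i hi := by
    rw [Category.assoc, g.comm i hi, ← Category.assoc, f.comm i hi, Category.assoc]

/-- `φ` is a homotopy from `f` to `g`:  here `φ i : X^{i+1} ⟶ Y^i` plays the role of
the component `φ^{i+1}` (for `0 ≤ i ≤ n`, i.e. `1 ≤ i+1 ≤ n+1`). -/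
def IsHomotopy {X Y : NComplex C n} (f g : NComplexHom X Y)
    (φ : ∀ i : ℕ, X.obj (i + 1) ⟶ Y.obj i) : Prop :=
  (g.f 0 - f.f 0 = X.d 0 ≫ φ 0) ∧
    (∀ i : ℕ, i + 1 ≤ n →
      g.f (i + 1) - f.f (i + 1) = φ i ≫ Y.d i + X.d (i + 1) ≫ φ (i + 1)) ∧
    (g.f (n + 1) - f.f (n + 1) = φ n ≫ Y.d n)

/-- Two morphisms of complexes are homotopic. -/
def Homotopic {X Y : NComplex C n} (f g : NComplexHom X Y) : Prop :=
  ∃ φ, IsHomotopy f g φ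

/-- `g` is a homotopy inverse of `f`. -/
def IsHomotopyInverse {X Y : NComplex C n} (f : NComplexHom X Y) (g : NComplexHom Y X) : Prop :=
  Homotopic (f.comp g) (NComplexHom.id X) ∧ Homotopic (g.comp f) (NComplexHom.id Y)

/-- `f` is a homotopy equivalence of complexes. -/
def IsHomotopyEquiv {X Y : NComplex C n} (f : NComplexHom X Y) : Prop :=
  ∃ g, IsHomotopyInverse f g

/-- Exactness of a two-term sequence of (pointed) sets at the middle term:
the image of `f` equals the kernel of `g`. -/
def ExactAt {α β γ : Type*} [Zero γ] (f : α → β) (g : β → γ) : Prop :=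
  ∀ b : β, g b = 0 ↔ ∃ a : α, f a = b

end NExangulated
namespace NExangulated

variable {C : Type u} [Category.{v} C] [Preadditive C] {n : ℕ}

section E

variable (E : Cᵒᵖ ⥤ C ⥤ AddCommGrpCat.{w})

/-- `a_*δ := E(id, a)(δ)`. -/
def pushE {A A' B : C} (a : A ⟶ A') (δ : (E.obj (op B)).obj A) : (E.obj (op B)).obj A' :=
  (E.obj (op B)).map a δ

/-- `c^*δ := E(c, id)(δ)`. -/
def pullE {A B B' : C} (c : B' ⟶ B) (δ : (E.obj (op B)).obj A) : (E.obj (op B')).obj A :=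
  (E.map c.op).app A δ

/-- `⟨X, δ⟩` is an `E`-attached complex: `(d^0)_*δ = 0` and `(d^n)^*δ = 0`. -/
def IsAttached (X : NComplex C n) (δ : (E.obj (op (X.obj (n + 1)))).obj (X.obj 0)) : Prop :=
  pushE E (X.d 0) δ = 0 ∧ pullE E (X.d n) δ = 0

/-- `⟨X, δ⟩` is an `n`-exangle: for every object `Q` the two induced sequences of
abelian groups
`C(Q,X^0) → ⋯ → C(Q,X^{n+1}) → E(Q,X^0)` and
`C(X^{n+1},Q) → ⋯ → C(X^0,Q) → E(X^{n+1},Q)`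
are exact at every term having both an incoming and an outgoing map. -/
def IsExangle (X : NComplex C n) (δ : (E.obj (op (X.obj (n + 1)))).obj (X.obj 0)) : Prop :=
  (∀ Q : C,
      (∀ i : ℕ, i + 1 ≤ n →
        ExactAt (fun u : Q ⟶ X.obj i => u ≫ X.d i)
          (fun u : Q ⟶ X.obj (i + 1) => u ≫ X.d (i + 1))) ∧
      ExactAt (fun u : Q ⟶ X.obj n => u ≫ X.d n)
        (fun u : Q ⟶ X.obj (n + 1) => pullE E u δ)) ∧
  (∀ Q : C,
      (∀ i : ℕ, i + 1 ≤ n →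
        ExactAt (fun u : X.obj (i + 2) ⟶ Q => X.d (i + 1) ≫ u)
          (fun u : X.obj (i + 1) ⟶ Q => X.d i ≫ u)) ∧
      ExactAt (fun u : X.obj 1 ⟶ Q => X.d 0 ≫ u)
        (fun u : X.obj 0 ⟶ Q => pushE E u δ))

end E

end NExangulated
namespace NExangulated

attribute [local instance] CategoryTheory.Limits.hasBinaryBiproducts_of_finite_biproducts

variable {C : Type u} [Category.{v} C] [Preadditive C] [HasFiniteBiproducts C] {n : ℕ}

/-- The direct sum of two `(n+2)`-term complexes. -/
noncomputable def dsum (X Y : NComplex C n) : NComplex C n where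
  obj i := X.obj i ⊞ Y.obj i
  d i := biprod.map (X.d i) (Y.d i)
  d_comp_d i hi := by
    apply biprod.hom_ext
    · simp [X.d_comp_d i hi]
    · simp [Y.d_comp_d i hi]

section Helpers
set_option linter.unusedSectionVars false

variable (E : Cᵒᵖ ⥤ C ⥤ AddCommGrpCat.{w})

lemma pullE_pullE {A B B' B'' : C} (c' : B'' ⟶ B') (c : B' ⟶ B)
    (x : (E.obj (op B)).obj A) : pullE E c' (pullE E c x) = pullE E (c' ≫ c) x := by
  simp [pullE, op_comp, Functor.map_comp]

lemma pushE_pushE {A A' A'' B : C} (a : A ⟶ A') (a' : A' ⟶ A'')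
    (x : (E.obj (op B)).obj A) : pushE E a' (pushE E a x) = pushE E (a ≫ a') x := by
  simp [pushE, Functor.map_comp]

lemma pushE_pullE {A A' B B' : C} (a : A ⟶ A') (c : B' ⟶ B)
    (x : (E.obj (op B)).obj A) :
    pushE E a (pullE E c x) = pullE E c (pushE E a x) := by
  have h := congrArg (fun (φ : (E.obj (op B)).obj A ⟶ (E.obj (op B')).obj A') => φ x)
    ((E.map c.op).naturality a)
  simp only [comp_apply] at h
  exact h.symm

lemma pullE_zero_elt {A B B' : C} (c : B' ⟶ B) :
    pullE E c (0 : (E.obj (op B)).obj A) = 0 :=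
  map_zero _

lemma pushE_zero_elt {A A' B : C} (a : A ⟶ A') :
    pushE E a (0 : (E.obj (op B)).obj A) = 0 :=
  map_zero _

lemma pullE_add_elt {A B B' : C} (c : B' ⟶ B) (x y : (E.obj (op B)).obj A) :
    pullE E c (x + y) = pullE E c x + pullE E c y :=
  map_add _ _ _

lemma pushE_add_elt {A A' B : C} (a : A ⟶ A') (x y : (E.obj (op B)).obj A) :
    pushE E a (x + y) = pushE E a x + pushE E a y :=
  map_add _ _ _

lemma pullE_add [E.Additive] {A B B' : C} (c c' : B' ⟶ B)
    (x : (E.obj (op B)).obj A) :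
    pullE E (c + c') x = pullE E c x + pullE E c' x := by
  simp [pullE, op_add, E.map_add, NatTrans.app_add]

lemma pushE_add [∀ B : Cᵒᵖ, (E.obj B).Additive] {A A' B : C} (a a' : A ⟶ A')
    (x : (E.obj (op B)).obj A) :
    pushE E (a + a') x = pushE E a x + pushE E a' x := by
  simp [pushE, Functor.map_add]

lemma pullE_id {A B : C} (x : (E.obj (op B)).obj A) : pullE E (𝟙 B) x = x := by
  simp [pullE]

lemma pushE_id {A B : C} (x : (E.obj (op B)).obj A) : pushE E (𝟙 A) x = x := by
  simp [pushE]

lemma pushE_zero [∀ B : Cᵒᵖ, (E.obj B).Additive] {A A' B : C}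
    (x : (E.obj (op B)).obj A) : pushE E (0 : A ⟶ A') x = 0 := by
  simp [pushE, Functor.map_zero]

lemma pullE_zero [E.Additive] {A B B' : C} (x : (E.obj (op B)).obj A) :
    pullE E (0 : B' ⟶ B) x = 0 := by
  have : E.map (0 : B' ⟶ B).op = 0 := by
    have : ((0 : B' ⟶ B).op : (op B ⟶ op B')) = 0 := rfl
    rw [this, E.map_zero]
  simp [pullE, this]

/-- Transporting `ExactAt` along compatible bijections. -/
lemma exactAt_equiv {α β γ α' β' γ' : Type*} [Zero γ] [Zero γ']
    (eα : α ≃ α') (eβ : β ≃ β') (eγ : γ ≃ γ') (hγ : ∀ x, eγ x = 0 ↔ x = 0)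
    {f : α → β} {g : β → γ} {f' : α' → β'} {g' : β' → γ'}
    (hf : ∀ a, eβ (f a) = f' (eα a)) (hg : ∀ b, eγ (g b) = g' (eβ b)) :
    ExactAt f g ↔ ExactAt f' g' := by
  constructor
  · intro h b'
    have h1 : g' b' = eγ (g (eβ.symm b')) := by
      rw [hg (eβ.symm b'), eβ.apply_symm_apply]
    rw [h1, hγ, h (eβ.symm b')]
    constructor
    · rintro ⟨a, ha⟩
      exact ⟨eα a, by rw [← hf a, ha, eβ.apply_symm_apply]⟩
    · rintro ⟨a', ha'⟩
      exact ⟨eα.symm a', eβ.injective (by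
        rw [hf, eα.apply_symm_apply, ha', eβ.apply_symm_apply])⟩
  · intro h b
    have h1 : g b = 0 ↔ g' (eβ b) = 0 := by rw [← hg b, hγ]
    rw [h1, h (eβ b)]
    constructor
    · rintro ⟨a', ha'⟩
      exact ⟨eα.symm a', eβ.injective (by rw [hf, eα.apply_symm_apply, ha'])⟩
    · rintro ⟨a, ha⟩
      exact ⟨eα a, by rw [← hf a, ha]⟩

/-- Exactness of a product of sequences. -/
lemma exactAt_prod_iff {α β γ α' β' γ' : Type*}
    [Zero α] [Zero β] [Zero γ] [Zero α'] [Zero β'] [Zero γ']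
    {f : α → β} {g : β → γ} {f' : α' → β'} {g' : β' → γ'}
    (hf0 : f 0 = 0) (hg0 : g 0 = 0) (hf0' : f' 0 = 0) (hg0' : g' 0 = 0) :
    ExactAt (Prod.map f f') (Prod.map g g') ↔ ExactAt f g ∧ ExactAt f' g' := by
  constructor
  · intro h
    constructor
    · intro b
      constructor
      · intro hb
        obtain ⟨⟨a, a'⟩, ha⟩ := (h (b, 0)).mp (by
          simp [Prod.map, hb, hg0', Prod.ext_iff])
        exact ⟨a, congrArg Prod.fst ha⟩
      · rintro ⟨a, ha⟩
        have := (h (b, 0)).mpr ⟨(a, 0), by simp [Prod.map, ha, hf0', Prod.ext_iff]⟩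
        exact congrArg Prod.fst this
    · intro b'
      constructor
      · intro hb'
        obtain ⟨⟨a, a'⟩, ha⟩ := (h (0, b')).mp (by
          simp [Prod.map, hb', hg0, Prod.ext_iff])
        exact ⟨a', congrArg Prod.snd ha⟩
      · rintro ⟨a', ha'⟩
        have := (h (0, b')).mpr ⟨(0, a'), by simp [Prod.map, ha', hf0, Prod.ext_iff]⟩
        exact congrArg Prod.snd this
  · rintro ⟨h1, h2⟩ ⟨b, b'⟩
    constructor
    · intro hb
      obtain ⟨a, ha⟩ := (h1 b).mp (congrArg Prod.fst hb)
      obtain ⟨a', ha'⟩ := (h2 b').mp (congrArg Prod.snd hb)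
      exact ⟨(a, a'), by simp [Prod.map, ha, ha']⟩
    · rintro ⟨⟨a, a'⟩, ha⟩
      have h1' := (h1 b).mpr ⟨a, congrArg Prod.fst ha⟩
      have h2' := (h2 b').mpr ⟨a', congrArg Prod.snd ha⟩
      simp [Prod.map, Prod.ext_iff, h1', h2']

lemma equiv_map_eq_zero_iff {α β : Type*} [Zero α] [Zero β] (e : α ≃ β)
    (h0 : e 0 = 0) (x : α) : e x = 0 ↔ x = 0 :=
  ⟨fun h => e.injective (by rw [h, h0]), fun h => by rw [h, h0]⟩

/-- `(Q ⟶ A ⊞ B) ≃ (Q ⟶ A) × (Q ⟶ B)`. -/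
noncomputable def homEquivL (Q A B : C) : (Q ⟶ A ⊞ B) ≃ (Q ⟶ A) × (Q ⟶ B) where
  toFun u := (u ≫ biprod.fst, u ≫ biprod.snd)
  invFun p := biprod.lift p.1 p.2
  left_inv u := by apply biprod.hom_ext <;> simp
  right_inv p := by simp

/-- `(A ⊞ B ⟶ Q) ≃ (A ⟶ Q) × (B ⟶ Q)`. -/
noncomputable def homEquivR (A B Q : C) : (A ⊞ B ⟶ Q) ≃ (A ⟶ Q) × (B ⟶ Q) where
  toFun u := (biprod.inl ≫ u, biprod.inr ≫ u)
  invFun p := biprod.desc p.1 p.2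
  left_inv u := by apply biprod.hom_ext' <;> simp
  right_inv p := by simp

/-- `E(Q, A ⊞ B) ≃ E(Q, A) × E(Q, B)`. -/
noncomputable def EEquivL [∀ B : Cᵒᵖ, (E.obj B).Additive] (Q A B : C) :
    (E.obj (op Q)).obj (A ⊞ B) ≃ (E.obj (op Q)).obj A × (E.obj (op Q)).obj B where
  toFun x := (pushE E biprod.fst x, pushE E biprod.snd x)
  invFun p := pushE E biprod.inl p.1 + pushE E biprod.inr p.2
  left_inv x := by
    dsimp only
    rw [pushE_pushE, pushE_pushE, ← pushE_add, biprod.total, pushE_id]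
  right_inv p := by
    dsimp only
    have h1 : pushE E biprod.fst (pushE E biprod.inl p.1 + pushE E biprod.inr p.2) = p.1 := by
      rw [pushE_add_elt, pushE_pushE, pushE_pushE]
      simp [pushE_id, pushE_zero]
    have h2 : pushE E biprod.snd (pushE E biprod.inl p.1 + pushE E biprod.inr p.2) = p.2 := by
      rw [pushE_add_elt, pushE_pushE, pushE_pushE]
      simp [pushE_id, pushE_zero]
    exact Prod.ext h1 h2

/-- `E(A ⊞ B, Q) ≃ E(A, Q) × E(B, Q)`. -/
noncomputable def EEquivR [E.Additive] (A B Q : C) :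
    (E.obj (op (A ⊞ B))).obj Q ≃ (E.obj (op A)).obj Q × (E.obj (op B)).obj Q where
  toFun x := (pullE E biprod.inl x, pullE E biprod.inr x)
  invFun p := pullE E biprod.fst p.1 + pullE E biprod.snd p.2
  left_inv x := by
    dsimp only
    rw [pullE_pullE, pullE_pullE, ← pullE_add, biprod.total, pullE_id]
  right_inv p := by
    dsimp only
    have h1 : pullE E biprod.inl (pullE E biprod.fst p.1 + pullE E biprod.snd p.2) = p.1 := by
      rw [pullE_add_elt, pullE_pullE, pullE_pullE]
      simp [pullE_id, pullE_zero]
    have h2 : pullE E biprod.inr (pullE E biprod.fst p.1 + pullE E biprod.snd p.2) = p.2 := by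
      rw [pullE_add_elt, pullE_pullE, pullE_pullE]
      simp [pullE_id, pullE_zero]
    exact Prod.ext h1 h2

end Helpers


/-- Given `E`-attached complexes `⟨X•,δ⟩` and `⟨Y•,ρ⟩`, the
`E`-attached complex `⟨X• ⊕ Y•, δ ⊕ ρ⟩` is an `n`-exangle if and only if both
`⟨X•,δ⟩` and `⟨Y•,ρ⟩` are `n`-exangles.  (Here `σ = δ ⊕ ρ` is characterised by
the four equations expressing its components with respect to the biproduct.) -/
theorem statement_7 (hn : 0 < n) (E : Cᵒᵖ ⥤ C ⥤ AddCommGrpCat.{w})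
    [E.Additive] [∀ B : Cᵒᵖ, (E.obj B).Additive]
    (X Y : NComplex C n)
    (δ : (E.obj (op (X.obj (n + 1)))).obj (X.obj 0))
    (ρ : (E.obj (op (Y.obj (n + 1)))).obj (Y.obj 0))
    (hX : IsAttached E X δ) (hY : IsAttached E Y ρ)
    (σ : (E.obj (op ((dsum X Y).obj (n + 1)))).obj ((dsum X Y).obj 0))
    (hσ1 : pushE E (biprod.fst : X.obj 0 ⊞ Y.obj 0 ⟶ X.obj 0)
      (pullE E (biprod.inl : X.obj (n + 1) ⟶ X.obj (n + 1) ⊞ Y.obj (n + 1)) σ) = δ)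
    (hσ2 : pushE E (biprod.snd : X.obj 0 ⊞ Y.obj 0 ⟶ Y.obj 0)
      (pullE E (biprod.inl : X.obj (n + 1) ⟶ X.obj (n + 1) ⊞ Y.obj (n + 1)) σ) = 0)
    (hσ3 : pushE E (biprod.fst : X.obj 0 ⊞ Y.obj 0 ⟶ X.obj 0)
      (pullE E (biprod.inr : Y.obj (n + 1) ⟶ X.obj (n + 1) ⊞ Y.obj (n + 1)) σ) = 0)
    (hσ4 : pushE E (biprod.snd : X.obj 0 ⊞ Y.obj 0 ⟶ Y.obj 0)
      (pullE E (biprod.inr : Y.obj (n + 1) ⟶ X.obj (n + 1) ⊞ Y.obj (n + 1)) σ) = ρ) :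
    IsExangle E (dsum X Y) σ ↔ (IsExangle E X δ ∧ IsExangle E Y ρ) := by
  classical
  change (E.obj (op (X.obj (n + 1) ⊞ Y.obj (n + 1)))).obj (X.obj 0 ⊞ Y.obj 0) at σ
  -- covariant middle terms
  have c1 : ∀ (Q : C) (i : ℕ), i + 1 ≤ n →
      (ExactAt (fun u : Q ⟶ (dsum X Y).obj i => u ≫ (dsum X Y).d i)
        (fun u : Q ⟶ (dsum X Y).obj (i + 1) => u ≫ (dsum X Y).d (i + 1)) ↔
      (ExactAt (fun u : Q ⟶ X.obj i => u ≫ X.d i)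
          (fun u : Q ⟶ X.obj (i + 1) => u ≫ X.d (i + 1)) ∧
        ExactAt (fun u : Q ⟶ Y.obj i => u ≫ Y.d i)
          (fun u : Q ⟶ Y.obj (i + 1) => u ≫ Y.d (i + 1)))) := by
    intro Q i _
    refine (exactAt_equiv (homEquivL Q (X.obj i) (Y.obj i))
      (homEquivL Q (X.obj (i + 1)) (Y.obj (i + 1)))
      (homEquivL Q (X.obj (i + 2)) (Y.obj (i + 2)))
      (fun x => equiv_map_eq_zero_iff (homEquivL Q (X.obj (i + 2)) (Y.obj (i + 2)))
        (by simp [homEquivL, Prod.ext_iff]) x)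
      (f' := Prod.map (fun u : Q ⟶ X.obj i => u ≫ X.d i)
        (fun u : Q ⟶ Y.obj i => u ≫ Y.d i))
      (g' := Prod.map (fun u : Q ⟶ X.obj (i + 1) => u ≫ X.d (i + 1))
        (fun u : Q ⟶ Y.obj (i + 1) => u ≫ Y.d (i + 1)))
      (fun u => by simp [homEquivL, dsum, Prod.ext_iff])
      (fun u => by simp [homEquivL, dsum, Prod.ext_iff])).trans
      (exactAt_prod_iff (by simp) (by simp) (by simp) (by simp))
  -- covariant last term
  have c2 : ∀ Q : C,
      (ExactAt (fun u : Q ⟶ (dsum X Y).obj n => u ≫ (dsum X Y).d n)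
        (fun u : Q ⟶ (dsum X Y).obj (n + 1) => pullE E u σ) ↔
      (ExactAt (fun u : Q ⟶ X.obj n => u ≫ X.d n)
          (fun u : Q ⟶ X.obj (n + 1) => pullE E u δ) ∧
        ExactAt (fun u : Q ⟶ Y.obj n => u ≫ Y.d n)
          (fun u : Q ⟶ Y.obj (n + 1) => pullE E u ρ))) := by
    intro Q
    have hg : ∀ u : Q ⟶ X.obj (n + 1) ⊞ Y.obj (n + 1),
        EEquivL E Q (X.obj 0) (Y.obj 0) (pullE E u σ) =
          (pullE E (u ≫ biprod.fst) δ, pullE E (u ≫ biprod.snd) ρ) := by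
      intro u
      have hu : (u ≫ biprod.fst) ≫ biprod.inl + (u ≫ biprod.snd) ≫ biprod.inr = u := by
        rw [Category.assoc, Category.assoc, ← Preadditive.comp_add, biprod.total,
          Category.comp_id]
      have hσx : pullE E u σ
          = pullE E (u ≫ biprod.fst) (pullE E biprod.inl σ)
            + pullE E (u ≫ biprod.snd) (pullE E biprod.inr σ) := by
        conv_lhs => rw [← hu]
        rw [pullE_add, pullE_pullE, pullE_pullE]
      have hσ1' : pullE E biprod.inl (pushE E biprod.fst σ) = δ := by
        rw [← pushE_pullE]; exact hσ1
      have hσ2' : pullE E biprod.inl (pushE E biprod.snd σ) = 0 := by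
        rw [← pushE_pullE]; exact hσ2
      have hσ3' : pullE E biprod.inr (pushE E biprod.fst σ) = 0 := by
        rw [← pushE_pullE]; exact hσ3
      have hσ4' : pullE E biprod.inr (pushE E biprod.snd σ) = ρ := by
        rw [← pushE_pullE]; exact hσ4
      have k1 : pushE E biprod.fst (pullE E u σ) = pullE E (u ≫ biprod.fst) δ := by
        rw [hσx, pushE_add_elt]
        simp only [pushE_pullE]
        rw [hσ1', hσ3', pullE_zero_elt, add_zero]
      have k2 : pushE E biprod.snd (pullE E u σ) = pullE E (u ≫ biprod.snd) ρ := by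
        rw [hσx, pushE_add_elt]
        simp only [pushE_pullE]
        rw [hσ2', hσ4', pullE_zero_elt, zero_add]
      exact Prod.ext k1 k2
    refine (exactAt_equiv (homEquivL Q (X.obj n) (Y.obj n))
      (homEquivL Q (X.obj (n + 1)) (Y.obj (n + 1)))
      (EEquivL E Q (X.obj 0) (Y.obj 0))
      (fun x => equiv_map_eq_zero_iff (EEquivL E Q (X.obj 0) (Y.obj 0))
        (by simp [EEquivL, pushE_zero_elt, Prod.ext_iff]) x)
      (f' := Prod.map (fun u : Q ⟶ X.obj n => u ≫ X.d n)
        (fun u : Q ⟶ Y.obj n => u ≫ Y.d n))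
      (g' := Prod.map (fun u : Q ⟶ X.obj (n + 1) => pullE E u δ)
        (fun u : Q ⟶ Y.obj (n + 1) => pullE E u ρ))
      (fun u => by simp [homEquivL, dsum, Prod.ext_iff])
      (fun u => by
        have := hg u
        exact this)).trans
      (exactAt_prod_iff (by simp) (by exact pullE_zero E δ) (by simp)
        (by exact pullE_zero E ρ))
  -- contravariant middle terms
  have c3 : ∀ (Q : C) (i : ℕ), i + 1 ≤ n →
      (ExactAt (fun u : (dsum X Y).obj (i + 2) ⟶ Q => (dsum X Y).d (i + 1) ≫ u)
        (fun u : (dsum X Y).obj (i + 1) ⟶ Q => (dsum X Y).d i ≫ u) ↔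
      (ExactAt (fun u : X.obj (i + 2) ⟶ Q => X.d (i + 1) ≫ u)
          (fun u : X.obj (i + 1) ⟶ Q => X.d i ≫ u) ∧
        ExactAt (fun u : Y.obj (i + 2) ⟶ Q => Y.d (i + 1) ≫ u)
          (fun u : Y.obj (i + 1) ⟶ Q => Y.d i ≫ u))) := by
    intro Q i _
    refine (exactAt_equiv (homEquivR (X.obj (i + 2)) (Y.obj (i + 2)) Q)
      (homEquivR (X.obj (i + 1)) (Y.obj (i + 1)) Q)
      (homEquivR (X.obj i) (Y.obj i) Q)
      (fun x => equiv_map_eq_zero_iff (homEquivR (X.obj i) (Y.obj i) Q)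
        (by simp [homEquivR, Prod.ext_iff]) x)
      (f' := Prod.map (fun u : X.obj (i + 2) ⟶ Q => X.d (i + 1) ≫ u)
        (fun u : Y.obj (i + 2) ⟶ Q => Y.d (i + 1) ≫ u))
      (g' := Prod.map (fun u : X.obj (i + 1) ⟶ Q => X.d i ≫ u)
        (fun u : Y.obj (i + 1) ⟶ Q => Y.d i ≫ u))
      (fun u => by simp [homEquivR, dsum, Prod.ext_iff])
      (fun u => by simp [homEquivR, dsum, Prod.ext_iff])).trans
      (exactAt_prod_iff (by simp) (by simp) (by simp) (by simp))
  -- contravariant last term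
  have c4 : ∀ Q : C,
      (ExactAt (fun u : (dsum X Y).obj 1 ⟶ Q => (dsum X Y).d 0 ≫ u)
        (fun u : (dsum X Y).obj 0 ⟶ Q => pushE E u σ) ↔
      (ExactAt (fun u : X.obj 1 ⟶ Q => X.d 0 ≫ u)
          (fun u : X.obj 0 ⟶ Q => pushE E u δ) ∧
        ExactAt (fun u : Y.obj 1 ⟶ Q => Y.d 0 ≫ u)
          (fun u : Y.obj 0 ⟶ Q => pushE E u ρ))) := by
    intro Q
    have hg : ∀ u : X.obj 0 ⊞ Y.obj 0 ⟶ Q,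
        EEquivR E (X.obj (n + 1)) (Y.obj (n + 1)) Q (pushE E u σ) =
          (pushE E (biprod.inl ≫ u) δ, pushE E (biprod.inr ≫ u) ρ) := by
      intro u
      have hu : biprod.fst ≫ (biprod.inl ≫ u) + biprod.snd ≫ (biprod.inr ≫ u) = u := by
        rw [← Category.assoc, ← Category.assoc, ← Preadditive.add_comp, biprod.total,
          Category.id_comp]
      have hσx : pushE E u σ
          = pushE E (biprod.inl ≫ u) (pushE E biprod.fst σ)
            + pushE E (biprod.inr ≫ u) (pushE E biprod.snd σ) := by
        conv_lhs => rw [← hu]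
        rw [pushE_add, pushE_pushE, pushE_pushE]
      have k1 : pullE E biprod.inl (pushE E u σ) = pushE E (biprod.inl ≫ u) δ := by
        rw [hσx, pullE_add_elt]
        simp only [← pushE_pullE]
        rw [hσ1, hσ2, pushE_zero_elt, add_zero]
      have k2 : pullE E biprod.inr (pushE E u σ) = pushE E (biprod.inr ≫ u) ρ := by
        rw [hσx, pullE_add_elt]
        simp only [← pushE_pullE]
        rw [hσ3, hσ4, pushE_zero_elt, zero_add]
      exact Prod.ext k1 k2
    refine (exactAt_equiv (homEquivR (X.obj 1) (Y.obj 1) Q)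
      (homEquivR (X.obj 0) (Y.obj 0) Q)
      (EEquivR E (X.obj (n + 1)) (Y.obj (n + 1)) Q)
      (fun x => equiv_map_eq_zero_iff (EEquivR E (X.obj (n + 1)) (Y.obj (n + 1)) Q)
        (by simp [EEquivR, pullE_zero_elt, Prod.ext_iff]) x)
      (f' := Prod.map (fun u : X.obj 1 ⟶ Q => X.d 0 ≫ u)
        (fun u : Y.obj 1 ⟶ Q => Y.d 0 ≫ u))
      (g' := Prod.map (fun u : X.obj 0 ⟶ Q => pushE E u δ)
        (fun u : Y.obj 0 ⟶ Q => pushE E u ρ))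
      (fun u => by simp [homEquivR, dsum, Prod.ext_iff])
      (fun u => by
        have := hg u
        exact this)).trans
      (exactAt_prod_iff (by simp) (by exact pushE_zero E δ) (by simp)
        (by exact pushE_zero E ρ))
  constructor
  · rintro ⟨hcov, hcon⟩
    exact ⟨⟨fun Q => ⟨fun i hi => ((c1 Q i hi).mp ((hcov Q).1 i hi)).1,
        ((c2 Q).mp (hcov Q).2).1⟩,
      fun Q => ⟨fun i hi => ((c3 Q i hi).mp ((hcon Q).1 i hi)).1,
        ((c4 Q).mp (hcon Q).2).1⟩⟩,
      ⟨fun Q => ⟨fun i hi => ((c1 Q i hi).mp ((hcov Q).1 i hi)).2,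
        ((c2 Q).mp (hcov Q).2).2⟩,
      fun Q => ⟨fun i hi => ((c3 Q i hi).mp ((hcon Q).1 i hi)).2,
        ((c4 Q).mp (hcon Q).2).2⟩⟩⟩
  · rintro ⟨⟨hXcov, hXcon⟩, ⟨hYcov, hYcon⟩⟩
    exact ⟨fun Q => ⟨fun i hi => (c1 Q i hi).mpr ⟨(hXcov Q).1 i hi, (hYcov Q).1 i hi⟩,
        (c2 Q).mpr ⟨(hXcov Q).2, (hYcov Q).2⟩⟩,
      fun Q => ⟨fun i hi => (c3 Q i hi).mpr ⟨(hXcon Q).1 i hi, (hYcon Q).1 i hi⟩,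
        (c4 Q).mpr ⟨(hXcon Q).2, (hYcon Q).2⟩⟩⟩


end NExangulated
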